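/- Let (Ω, 𝒜, μ), u, d, L, γ, θ, g, x(p), φ_{Δ,p} be as follows: u, d ∈ ℝ with d < 0 < u; L ∈ ℝ; γ : Ω → ℝ measurable with 0 < γ₋ ≤ γ ≤ γ₊ a.e.; θ, g : Ω → ℝ measurable and bounded; x(p) := log(−(p·u)/((1−p)·d)); φ_{Δ,p} := θ·Δ/(u−d) + (x(p) + g)/(γ·(u−d)). Let (p*, Δ*) = ( (−d)/( u·exp( ( ∫(g/γ)dμ − (1−∫θ dμ)(u−d)L ) / ∫(1/γ)dμ ) − d ), (u−d)·L ). Then μ-almost everywhere, φ_{Δ*,p*} = (1/∫(1/γ)dμ)·( (1 − ∫θ dμ)/γ + θ·∫(1/γ)dμ )·L + (1/(u−d))·( g/γ − ( ∫(g/γ)dμ / ∫(1/γ)dμ )·(1/γ) ), and consequently ∫ φ_{Δ*,p*} dμ = L. -/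

import Mathlib

open MeasureTheory

/-- equilibrium strategy formula of the single-population MC-MFE.  At the
market-clearing pair `(p*, Δ*)`, the optimal position `φ_{Δ*,p*}` is a.e. equal to the
supply-share plus hedge-redistribution decomposition, and its mean is `L`. -/
theorem stmt_5 {Ω : Type*} [MeasurableSpace Ω] (μ : Measure Ω) [IsProbabilityMeasure μ]
    (u d L : ℝ) (hd : d < 0) (hu : 0 < u)
    (γ θ g : Ω → ℝ) (hγm : Measurable γ) (γlo γhi : ℝ) (hγlo : 0 < γlo)
    (hγb : ∀ᵐ ω ∂μ, γlo ≤ γ ω ∧ γ ω ≤ γhi)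
    (hθm : Measurable θ) (Cθ : ℝ) (hθb : ∀ᵐ ω ∂μ, |θ ω| ≤ Cθ)
    (hgm : Measurable g) (Cg : ℝ) (hgb : ∀ᵐ ω ∂μ, |g ω| ≤ Cg) :
    let x : ℝ → ℝ := fun p => Real.log (-(p * u) / ((1 - p) * d))
    let pstar : ℝ := (-d) / (u * Real.exp
      (((∫ ω, g ω / γ ω ∂μ) - (1 - ∫ ω, θ ω ∂μ) * (u - d) * L) / (∫ ω, 1 / γ ω ∂μ)) - d)
    let Δstar : ℝ := (u - d) * L
    let φ : Ω → ℝ := fun ω => θ ω * Δstar / (u - d) + (x pstar + g ω) / (γ ω * (u - d))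
    (∀ᵐ ω ∂μ, φ ω =
      (1 / ∫ ω', 1 / γ ω' ∂μ) *
        ((1 - ∫ ω', θ ω' ∂μ) / γ ω + θ ω * ∫ ω', 1 / γ ω' ∂μ) * L +
      (1 / (u - d)) *
        (g ω / γ ω - ((∫ ω', g ω' / γ ω' ∂μ) / (∫ ω', 1 / γ ω' ∂μ)) * (1 / γ ω))) ∧
    (∫ ω, φ ω ∂μ) = L := by
  intro x pstar Δstar φ
  have hud : (0:ℝ) < u - d := by linarith
  -- integrability
  have hγinvm : Measurable fun ω => 1 / γ ω := by
    exact measurable_const.div hγm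
  have hIγ : Integrable (fun ω => 1 / γ ω) μ := by
    refine Integrable.mono' (integrable_const (1/γlo)) hγinvm.aestronglyMeasurable ?_
    filter_upwards [hγb] with ω hω
    have h0 : 0 < γ ω := lt_of_lt_of_le hγlo hω.1
    rw [Real.norm_eq_abs, abs_of_pos (by positivity)]
    exact one_div_le_one_div_of_le hγlo hω.1
  have hIθ : Integrable θ μ := by
    refine Integrable.mono' (integrable_const Cθ) hθm.aestronglyMeasurable ?_
    filter_upwards [hθb] with ω hω
    simpa using hω
  have hIgγ : Integrable (fun ω => g ω / γ ω) μ := by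
    refine Integrable.mono' (integrable_const (Cg/γlo)) (hgm.div hγm).aestronglyMeasurable ?_
    filter_upwards [hγb, hgb] with ω hω hg
    have h0 : 0 < γ ω := lt_of_lt_of_le hγlo hω.1
    rw [Real.norm_eq_abs, abs_div, abs_of_pos h0]
    exact div_le_div₀ (le_trans (abs_nonneg _) hg) hg hγlo hω.1
  set T := ∫ ω, θ ω ∂μ with hT
  set A := ∫ ω, 1 / γ ω ∂μ with hAdef
  set B := ∫ ω, g ω / γ ω ∂μ with hB
  have hγhi : 0 < γhi := by
    obtain ⟨ω, h1, h2⟩ := hγb.exists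
    linarith
  have hA : 0 < A := by
    have h1 : (∫ _ω, (1/γhi : ℝ) ∂μ) ≤ A := by
      refine integral_mono_ae (integrable_const _) hIγ ?_
      filter_upwards [hγb] with ω hω
      exact one_div_le_one_div_of_le (lt_of_lt_of_le hγlo hω.1) hω.2
    have h2 : (∫ _ω, (1/γhi : ℝ) ∂μ) = 1/γhi := by simp
    rw [h2] at h1
    have : (0:ℝ) < 1/γhi := by positivity
    linarith
  -- simplify x pstar
  set E := Real.exp ((B - (1 - T) * (u - d) * L) / A) with hE
  have hEpos : 0 < E := Real.exp_pos _
  have hden : 0 < u * E - d := by nlinarith [mul_pos hu hEpos]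
  have hx : x pstar = ((1 - T) * (u - d) * L - B) / A := by
    show Real.log (-(pstar * u) / ((1 - pstar) * d)) = _
    have h1 : -(pstar * u) / ((1 - pstar) * d) = E⁻¹ := by
      show -((-d) / (u * E - d) * u) / ((1 - (-d) / (u * E - d)) * d) = E⁻¹
      have hd0 : d ≠ 0 := hd.ne
      have hden0 : u * E - d ≠ 0 := hden.ne'
      have hE0 : E ≠ 0 := hEpos.ne'
      field_simp
      ring
    rw [h1, Real.log_inv, hE, Real.log_exp]
    ring
  constructor
  · filter_upwards [hγb] with ω hω
    have hγ0 : γ ω ≠ 0 := ne_of_gt (lt_of_lt_of_le hγlo hω.1)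
    show θ ω * Δstar / (u - d) + (x pstar + g ω) / (γ ω * (u - d)) = _
    rw [hx]
    show _ = (1/A) * ((1 - T) / γ ω + θ ω * A) * L + (1/(u-d)) * (g ω / γ ω - (B/A) * (1/γ ω))
    have hΔ : Δstar = (u - d) * L := rfl
    rw [hΔ]
    field_simp
    ring
  · have hφeq : ∀ᵐ ω ∂μ, φ ω =
        ((1 - T) * L / A - B / (A * (u - d))) * (1 / γ ω)
          + (L * θ ω + (1/(u-d)) * (g ω / γ ω)) := by
      filter_upwards [hγb] with ω hω
      have hγ0 : γ ω ≠ 0 := ne_of_gt (lt_of_lt_of_le hγlo hω.1)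
      show θ ω * Δstar / (u - d) + (x pstar + g ω) / (γ ω * (u - d)) = _
      rw [hx]
      have hΔ : Δstar = (u - d) * L := rfl
      rw [hΔ]
      field_simp
      ring
    have h2 : Integrable (fun ω => L * θ ω + (1/(u-d)) * (g ω / γ ω)) μ :=
      (hIθ.const_mul L).add (hIgγ.const_mul _)
    rw [integral_congr_ae hφeq, integral_add (hIγ.const_mul _) h2,
      integral_add (hIθ.const_mul L) (hIgγ.const_mul _),
      integral_const_mul, integral_const_mul, integral_const_mul, ← hAdef, ← hT, ← hB]
    field_simp
    ring
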